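/- Let x₀ ∈ ℝ, let α' ∈ (0, 1], and let β ∈ (0, 1). If x_{t-1} is distributed as gaussianReal (√α'·x₀) (1-α') and the forward transition kernel sends y to the measure gaussianReal (√(1-β)·y) β, then the resulting marginal distribution of x_t, namely the bind (gaussianReal (√α'·x₀) (1-α')).bind (fun y => gaussianReal (√(1-β)·y) β), equals gaussianReal (√(α'·(1-β))·x₀) (1 − α'·(1-β)). (Consistency of the forward Markov chain: composing the Gaussian perturbation kernel q(x_t | x_{t-1}) = N(√(1-β_t)·x_{t-1}, β_t) with the time-(t−1) marginal yields the time-t marginal with α_t = α_{t-1}·(1-β_t).) -/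

import Mathlib

open MeasureTheory ProbabilityTheory Real

namespace Stmt16Aux

lemma exponent_identity (v w : ℝ) (hv : 0 < v) (hw : 0 < w) (c m x y : ℝ) :
    -(y - m)^2 / (2*v) + -(x - c*y)^2 / (2*w) =
      -(x - c*m)^2 / (2*(c^2*v + w)) +
        -((1/v + c^2/w)/2) * (y - (m/v + c*x/w)/(1/v + c^2/w))^2 := by
  have hA : (0:ℝ) < 1/v + c^2/w := by positivity
  have hV : (0:ℝ) < c^2*v + w := by positivity
  field_simp
  ring

lemma integrable_aux (v w : ℝ) (hv : 0 < v) (hw : 0 < w) (c m x : ℝ) :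
    Integrable (fun y : ℝ =>
      (√(2*π*v))⁻¹ * rexp (-(y - m)^2 / (2*v)) *
        ((√(2*π*w))⁻¹ * rexp (-(x - c*y)^2 / (2*w)))) := by
  have hA : (0:ℝ) < (1/v + c^2/w)/2 := by positivity
  have key : ∀ y : ℝ,
      (√(2*π*v))⁻¹ * rexp (-(y - m)^2 / (2*v)) *
        ((√(2*π*w))⁻¹ * rexp (-(x - c*y)^2 / (2*w))) =
      ((√(2*π*v))⁻¹ * (√(2*π*w))⁻¹ * rexp (-(x - c*m)^2 / (2*(c^2*v + w)))) *
        rexp (-((1/v + c^2/w)/2) * (y - (m/v + c*x/w)/(1/v + c^2/w))^2) := by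
    intro y
    have hE := exponent_identity v w hv hw c m x y
    calc (√(2*π*v))⁻¹ * rexp (-(y - m)^2 / (2*v)) *
        ((√(2*π*w))⁻¹ * rexp (-(x - c*y)^2 / (2*w)))
        = (√(2*π*v))⁻¹ * (√(2*π*w))⁻¹ *
            rexp (-(y - m)^2 / (2*v) + -(x - c*y)^2 / (2*w)) := by
          rw [Real.exp_add]; ring
      _ = _ := by rw [hE, Real.exp_add]; ring
  simp_rw [key]
  exact (((integrable_exp_neg_mul_sq hA).comp_sub_right _).const_mul _)

lemma gauss_conv (v w : ℝ) (hv : 0 < v) (hw : 0 < w) (c m x : ℝ) :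
    (∫ y : ℝ, (√(2*π*v))⁻¹ * rexp (-(y - m)^2 / (2*v)) *
        ((√(2*π*w))⁻¹ * rexp (-(x - c*y)^2 / (2*w)))) =
      (√(2*π*(c^2*v + w)))⁻¹ * rexp (-(x - c*m)^2 / (2*(c^2*v + w))) := by
  have hA : (0:ℝ) < (1/v + c^2/w)/2 := by positivity
  have key : ∀ y : ℝ,
      (√(2*π*v))⁻¹ * rexp (-(y - m)^2 / (2*v)) *
        ((√(2*π*w))⁻¹ * rexp (-(x - c*y)^2 / (2*w))) =
      ((√(2*π*v))⁻¹ * (√(2*π*w))⁻¹ * rexp (-(x - c*m)^2 / (2*(c^2*v + w)))) *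
        rexp (-((1/v + c^2/w)/2) * (y - (m/v + c*x/w)/(1/v + c^2/w))^2) := by
    intro y
    have hE := exponent_identity v w hv hw c m x y
    calc (√(2*π*v))⁻¹ * rexp (-(y - m)^2 / (2*v)) *
        ((√(2*π*w))⁻¹ * rexp (-(x - c*y)^2 / (2*w)))
        = (√(2*π*v))⁻¹ * (√(2*π*w))⁻¹ *
            rexp (-(y - m)^2 / (2*v) + -(x - c*y)^2 / (2*w)) := by
          rw [Real.exp_add]; ring
      _ = _ := by rw [hE, Real.exp_add]; ring
  simp_rw [key]
  rw [integral_const_mul]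
  have : (∫ y : ℝ, rexp (-((1/v + c^2/w)/2) * (y - (m/v + c*x/w)/(1/v + c^2/w))^2)) =
      √(π / ((1/v + c^2/w)/2)) := by
    rw [← integral_gaussian ((1/v + c^2/w)/2)]
    exact integral_sub_right_eq_self (fun y => rexp (-((1/v + c^2/w)/2) * y^2)) _
  rw [this]
  have hconst : (√(2*π*v))⁻¹ * (√(2*π*w))⁻¹ * √(π / ((1/v + c^2/w)/2)) =
      (√(2*π*(c^2*v + w)))⁻¹ := by
    rw [← Real.sqrt_inv, ← Real.sqrt_inv, ← Real.sqrt_mul (by positivity),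
      ← Real.sqrt_mul (by positivity), ← Real.sqrt_inv]
    congr 1
    have hA' : (0:ℝ) < 1/v + c^2/w := by positivity
    field_simp
    ring
  rw [mul_comm ((√(2*π*v))⁻¹ * (√(2*π*w))⁻¹ * rexp _), ← mul_assoc, mul_comm (√_),
    hconst]

lemma measurable_gaussianPDF2 (c : ℝ) (w : NNReal) :
    Measurable (fun p : ℝ × ℝ => gaussianPDF (c * p.1) w p.2) := by
  unfold gaussianPDF gaussianPDFReal
  refine ENNReal.measurable_ofReal.comp ?_
  fun_prop

lemma measurable_gauss_kernel (c : ℝ) (w : NNReal) :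
    Measurable (fun y : ℝ => gaussianReal (c*y) w) := by
  by_cases hw : w = 0
  · subst hw
    simp only [gaussianReal_zero_var]
    exact Measure.measurable_dirac.comp (measurable_const_mul c)
  · simp only [gaussianReal_of_var_ne_zero _ hw]
    refine Measure.measurable_of_measurable_coe _ fun s hs => ?_
    simp_rw [withDensity_apply _ hs]
    exact Measurable.lintegral_prod_right' (measurable_gaussianPDF2 c w)

end Stmt16Aux

open Stmt16Aux in
/-- Consistency of the forward Markov chain of a diffusion model: composing the
Gaussian transition kernel `y ↦ N(√(1-β)·y, β)` with the time-(t−1) marginal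
`N(√α'·x₀, 1-α')` yields the time-t marginal `N(√(α'(1-β))·x₀, 1 − α'(1-β))`. -/
theorem stmt16 (x₀ : ℝ) (α' β : NNReal) (hα0 : 0 < α') (hα1 : α' ≤ 1)
    (hβ0 : 0 < β) (hβ1 : β < 1) :
    (gaussianReal (Real.sqrt α' * x₀) (1 - α')).bind
        (fun y => gaussianReal (Real.sqrt (1 - (β : ℝ)) * y) β) =
      gaussianReal (Real.sqrt ((α' : ℝ) * (1 - (β : ℝ))) * x₀) (1 - α' * (1 - β)) := by
  have hβ1' : (β : ℝ) < 1 := hβ1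
  have hβ0' : (0:ℝ) < β := hβ0
  have hc2 : (√(1 - (β:ℝ)))^2 = 1 - (β:ℝ) := Real.sq_sqrt (by linarith)
  by_cases hv0 : (1 - α' : NNReal) = 0
  · have hα'1 : α' = 1 := le_antisymm hα1 (tsub_eq_zero_iff_le.mp hv0)
    subst hα'1
    rw [hv0, gaussianReal_zero_var,
      Measure.dirac_bind (measurable_gauss_kernel (√(1 - (β:ℝ))) β)]
    have h1 : ((1:NNReal):ℝ) = 1 := by norm_num
    have h2 : (1:NNReal) - 1 * (1 - β) = β := by
      rw [one_mul, tsub_tsub_cancel_of_le hβ1.le]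
    rw [h2]
    norm_num
  -- main case
  · have hαlt : α' < 1 := lt_of_le_of_ne hα1 (fun h => hv0 (by simp [h]))
    have hαlt' : (α':ℝ) < 1 := hαlt
    have hv' : (0:ℝ) < 1 - (α':ℝ) := by linarith
    set c : ℝ := √(1 - (β:ℝ)) with hc
    set m : ℝ := √(α':ℝ) * x₀ with hm
    have hw0 : β ≠ 0 := hβ0.ne'
    have hcoev : ((1 - α' : NNReal) : ℝ) = 1 - (α':ℝ) := NNReal.coe_sub hα1
    have hlt : α' * (1 - β) < 1 :=
      lt_of_le_of_lt (mul_le_of_le_one_left zero_le hα1)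
        (tsub_lt_self one_pos hβ0)
    have hV0 : (1 - α' * (1 - β) : NNReal) ≠ 0 := (tsub_pos_of_lt hlt).ne'
    have hcoeV : ((1 - α' * (1 - β) : NNReal) : ℝ) = 1 - (α':ℝ) * (1 - (β:ℝ)) := by
      rw [NNReal.coe_sub hlt.le, NNReal.coe_mul, NNReal.coe_sub hβ1.le]
      norm_num
    have hVeq : ((1 - α' * (1 - β) : NNReal) : ℝ) = c^2 * ((1 - α' : NNReal) : ℝ) + (β:ℝ) := by
      rw [hcoeV, hcoev, hc, hc2]; ring
    have hmean : √((α':ℝ) * (1 - (β:ℝ))) * x₀ = c * m := by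
      rw [Real.sqrt_mul α'.coe_nonneg, hm]; ring
    rw [hmean]
    -- expand measures
    ext s hs
    have hg : Measurable fun y : ℝ => (gaussianReal (c * y) β) s :=
      (Measure.measurable_coe hs).comp (measurable_gauss_kernel c β)
    rw [Measure.bind_apply hs (measurable_gauss_kernel c β).aemeasurable,
      gaussianReal_of_var_ne_zero _ hv0,
      lintegral_withDensity_eq_lintegral_mul volume (measurable_gaussianPDF _ _) hg,
      gaussianReal_apply _ hV0 s]
    simp only [Pi.mul_apply]
    have hker : ∀ y : ℝ, (gaussianReal (c * y) β) s = ∫⁻ x in s, gaussianPDF (c * y) β x :=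
      fun y => gaussianReal_apply _ hw0 s
    simp_rw [hker]
    have hpull : ∀ y : ℝ, gaussianPDF m (1 - α') y * ∫⁻ x in s, gaussianPDF (c * y) β x =
        ∫⁻ x in s, gaussianPDF m (1 - α') y * gaussianPDF (c * y) β x :=
      fun y => (lintegral_const_mul _ (measurable_gaussianPDF _ _)).symm
    simp_rw [hpull]
    rw [lintegral_lintegral_swap]
    · refine setLIntegral_congr_fun hs (fun x _ => ?_)
      have hv'' : (0:ℝ) < ((1 - α' : NNReal) : ℝ) := by rw [hcoev]; exact hv'
      calc ∫⁻ y, gaussianPDF m (1 - α') y * gaussianPDF (c * y) β x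
          = ∫⁻ y, ENNReal.ofReal (gaussianPDFReal m (1 - α') y *
              gaussianPDFReal (c * y) β x) := by
            refine lintegral_congr fun y => ?_
            rw [gaussianPDF, gaussianPDF,
              ← ENNReal.ofReal_mul (gaussianPDFReal_nonneg _ _ _)]
        _ = ENNReal.ofReal (∫ y, gaussianPDFReal m (1 - α') y *
              gaussianPDFReal (c * y) β x) := by
            refine (ofReal_integral_eq_lintegral_ofReal ?_ ?_).symm
            · exact integrable_aux _ _ hv'' hβ0' c m x
            · exact ae_of_all _ fun y =>
                mul_nonneg (gaussianPDFReal_nonneg _ _ _) (gaussianPDFReal_nonneg _ _ _)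
        _ = gaussianPDF (c * m) (1 - α' * (1 - β)) x := by
            have h := gauss_conv ((1 - α' : NNReal) : ℝ) (β:ℝ) hv'' hβ0' c m x
            simp only [gaussianPDF, gaussianPDFReal]
            rw [h, hVeq]
    · refine (Measurable.aemeasurable ?_)
      exact ((measurable_gaussianPDF m (1 - α')).comp measurable_fst).mul
        (measurable_gaussianPDF2 c β)
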